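/- arXiv:2510.22416 — 2 statements merged into one kernel-verified Lean document; each statement's English description precedes it below -/
import Mathlib

section
/- Let H > 0 and define the log-modulated fractional kernel K(t) := t^{H−1/2} log(1 + 1/t) / Γ(H + 1/2) for t > 0. Then: (a) ∫₀ᵗ K(s)² ds ∼ t^{2H} (log(1/t))² / (2H Γ(H+1/2)²) as t ↘ 0; and (b) for every γ ∈ (0, H) there exist constants C*, C > 0 such that C* t^{2H} ≤ ∫₀ᵗ K(s)² ds ≤ C t^{2γ} for all t ∈ (0, 1]. -/
open MeasureTheory Set Filter intervalIntegral

/-- The log-modulated fractional kernel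
`K(t) = t^{H−1/2} log(1 + 1/t) / Γ(H+1/2)`. -/
noncomputable def logModKernel (H t : ℝ) : ℝ :=
  t ^ (H - 1/2) * Real.log (1 + 1/t) / Real.Gamma (H + 1/2)

private lemma sq_rpow' {x : ℝ} (hx : 0 ≤ x) (a : ℝ) : (x ^ a) ^ 2 = x ^ (2 * a) := by
  rw [← Real.rpow_natCast (x ^ a) 2, ← Real.rpow_mul hx]
  norm_num [mul_comm]

private lemma log_one_add_le {ε s : ℝ} (hε : 0 < ε) (hs : 0 < s) (hs1 : s ≤ 1) :
    Real.log (1 + 1/s) ≤ 2 ^ ε / ε * s ^ (-ε) := by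
  have h1 : (0:ℝ) < 1 + 1/s := by positivity
  have h2 : ε * Real.log (1 + 1/s) = Real.log ((1 + 1/s) ^ ε) := (Real.log_rpow h1 ε).symm
  have h3 : Real.log ((1 + 1/s) ^ ε) ≤ (1 + 1/s) ^ ε := by
    have := Real.log_le_sub_one_of_pos (Real.rpow_pos_of_pos h1 ε)
    linarith
  have h4 : 1 + 1/s ≤ 2/s := by
    rw [← sub_nonneg]
    have : 2/s - (1 + 1/s) = (1 - s)/s := by field_simp; ring
    rw [this]
    exact div_nonneg (by linarith) hs.le
  have h5 : (1 + 1/s) ^ ε ≤ (2/s) ^ ε := Real.rpow_le_rpow h1.le h4 hε.le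
  have h6 : (2/s) ^ ε = 2 ^ ε * s ^ (-ε) := by
    rw [Real.div_rpow (by norm_num) hs.le, Real.rpow_neg hs.le, div_eq_mul_inv]
  have : ε * Real.log (1 + 1/s) ≤ 2 ^ ε * s ^ (-ε) := by
    rw [h2]; calc Real.log ((1 + 1/s) ^ ε) ≤ (1 + 1/s) ^ ε := h3
      _ ≤ (2/s) ^ ε := h5
      _ = 2 ^ ε * s ^ (-ε) := h6
  rw [div_mul_eq_mul_div, le_div_iff₀ hε]
  linarith [this]

private lemma kernel_sq_eq {H s : ℝ} (hs : 0 < s) :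
    (logModKernel H s) ^ 2
      = s ^ (2*H - 1) * (Real.log (1 + 1/s)) ^ 2 / Real.Gamma (H + 1/2) ^ 2 := by
  unfold logModKernel
  rw [div_pow, mul_pow, sq_rpow' hs.le]
  have : 2 * (H - 1/2) = 2*H - 1 := by ring
  rw [this]

private lemma kernel_sq_le {H γ : ℝ} (hγ : 0 < γ) (hγH : γ < H) {s : ℝ}
    (hs : 0 < s) (hs1 : s ≤ 1) :
    (logModKernel H s) ^ 2 ≤
      (2 ^ (H - γ) / (H - γ)) ^ 2 / Real.Gamma (H + 1/2) ^ 2 * s ^ (2*γ - 1) := by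
  set G := Real.Gamma (H + 1/2) with hGdef
  have hG : 0 < G := Real.Gamma_pos_of_pos (by linarith)
  set ε := H - γ with hε'
  have hε : 0 < ε := by simp [hε']; linarith
  have hlog0 : 0 ≤ Real.log (1 + 1/s) := Real.log_nonneg (by
    have : 0 < 1/s := by positivity
    linarith)
  have h1 : (Real.log (1 + 1/s)) ^ 2 ≤ (2 ^ ε / ε) ^ 2 * s ^ (-(2*ε)) := by
    calc (Real.log (1 + 1/s)) ^ 2 ≤ (2 ^ ε / ε * s ^ (-ε)) ^ 2 :=
          pow_le_pow_left₀ hlog0 (log_one_add_le hε hs hs1) 2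
      _ = (2 ^ ε / ε) ^ 2 * s ^ (-(2*ε)) := by
          rw [mul_pow, sq_rpow' hs.le]; ring_nf
  rw [kernel_sq_eq hs]
  have h2 : s ^ (2*H - 1) * (Real.log (1 + 1/s)) ^ 2 / G ^ 2
      ≤ s ^ (2*H - 1) * ((2 ^ ε / ε) ^ 2 * s ^ (-(2*ε))) / G ^ 2 := by
    gcongr
  refine h2.trans_eq ?_
  have h3 : s ^ (2*H - 1) * s ^ (-(2*ε)) = s ^ (2*γ - 1) := by
    rw [← Real.rpow_add hs]; congr 1; simp [hε']; ring
  field_simp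
  rw [← h3]

private lemma kernel_sq_ge {H s : ℝ} (hH : 0 < H) (hs : 0 < s) (hs1 : s ≤ 1) :
    (Real.log 2) ^ 2 / Real.Gamma (H + 1/2) ^ 2 * s ^ (2*H - 1)
      ≤ (logModKernel H s) ^ 2 := by
  have h2 : (2:ℝ) ≤ 1 + 1/s := by
    have : (1:ℝ) ≤ 1/s := one_le_one_div hs hs1
    linarith
  have hlog : Real.log 2 ≤ Real.log (1 + 1/s) :=
    Real.log_le_log (by norm_num) h2
  have hlog2 : (Real.log 2) ^ 2 ≤ (Real.log (1 + 1/s)) ^ 2 :=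
    pow_le_pow_left₀ (Real.log_nonneg (by norm_num)) hlog 2
  rw [kernel_sq_eq hs]
  have hGpos : 0 < Real.Gamma (H + 1/2) ^ 2 := by
    have : Real.Gamma (H + 1/2) ≠ 0 := by
      have : 0 < Real.Gamma (H + 1/2) := Real.Gamma_pos_of_pos (by linarith)
      exact this.ne'
    positivity
  rw [div_mul_eq_mul_div, mul_comm ((Real.log 2)^2) (s ^ (2*H-1))]
  gcongr

private lemma kernel_contAt {H x : ℝ} (hx : 0 < x) :
    ContinuousAt (fun s : ℝ => (logModKernel H s) ^ 2) x := by
  unfold logModKernel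
  have h1 : ContinuousAt (fun s : ℝ => s ^ (H - 1/2)) x :=
    Real.continuousAt_rpow_const x _ (Or.inl hx.ne')
  have h2 : ContinuousAt (fun s : ℝ => 1 + 1/s) x :=
    continuousAt_const.add (continuousAt_const.div continuousAt_id hx.ne')
  have h3 : ContinuousAt (fun s : ℝ => Real.log (1 + 1/s)) x :=
    (Real.continuousAt_log (by positivity)).comp h2
  exact (((h1.mul h3).div_const _).pow 2)

private lemma kernel_contOn (H : ℝ) :
    ContinuousOn (fun s : ℝ => (logModKernel H s) ^ 2) (Ioi 0) :=
  fun x hx => (kernel_contAt hx).continuousWithinAt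

private lemma kernel_intble {H : ℝ} (hH : 0 < H) :
    IntervalIntegrable (fun s => (logModKernel H s) ^ 2) volume 0 1 := by
  set γ := H/2 with hγ'
  have hγ : 0 < γ := by positivity
  have hγH : γ < H := by simp [hγ']; linarith
  set C := (2 ^ (H - γ) / (H - γ)) ^ 2 / Real.Gamma (H + 1/2) ^ 2 with hC'
  have hint : IntervalIntegrable (fun s : ℝ => C * s ^ (2*γ - 1)) volume 0 1 :=
    (intervalIntegrable_rpow' (by linarith)).const_mul C
  refine hint.mono_fun' (((kernel_contOn H).mono ?_).aestronglyMeasurable measurableSet_uIoc) ?_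
  · rw [Set.uIoc_of_le zero_le_one]; exact fun x hx => hx.1
  have hmem : ∀ᵐ x ∂(volume.restrict (Set.uIoc (0:ℝ) 1)), x ∈ Set.uIoc (0:ℝ) 1 :=
    ae_restrict_mem measurableSet_uIoc
  filter_upwards [hmem] with x hx
  rw [Set.uIoc_of_le zero_le_one] at hx
  have h := kernel_sq_le hγ hγH hx.1 hx.2
  rwa [Real.norm_eq_abs, abs_of_nonneg (sq_nonneg _)]

/-- Example 5.2: (a) `∫₀ᵗ K(s)² ds ∼ t^{2H} (log(1/t))²/(2H Γ(H+1/2)²)` as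
`t ↘ 0`, and (b) for every `γ ∈ (0,H)` the two-sided power bounds
`C* t^{2H} ≤ ∫₀ᵗ K(s)² ds ≤ C t^{2γ}` hold on `(0,1]`. -/
theorem stmt_16 (H : ℝ) (hH : 0 < H) :
    Filter.Tendsto (fun t : ℝ =>
        (∫ s in (0:ℝ)..t, (logModKernel H s) ^ 2) /
          (t ^ (2 * H) * (Real.log (1 / t)) ^ 2 / (2 * H * Real.Gamma (H + 1/2) ^ 2)))
      (nhdsWithin 0 (Set.Ioi 0)) (nhds 1) ∧
    ∀ γ : ℝ, 0 < γ → γ < H →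
      ∃ Cstar C : ℝ, 0 < Cstar ∧ 0 < C ∧
        ∀ t ∈ Set.Ioc (0 : ℝ) 1,
          Cstar * t ^ (2 * H) ≤ (∫ s in (0:ℝ)..t, (logModKernel H s) ^ 2) ∧
            (∫ s in (0:ℝ)..t, (logModKernel H s) ^ 2) ≤ C * t ^ (2 * γ) := by
  set G := Real.Gamma (H + 1/2) with hGdef
  have hG : 0 < G := Real.Gamma_pos_of_pos (by linarith)
  set F := fun t : ℝ => ∫ s in (0:ℝ)..t, (logModKernel H s) ^ 2 with hFdef
  have hlog2 : 0 < Real.log 2 := Real.log_pos (by norm_num)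
  -- Part (b)
  have keyb : ∀ γ : ℝ, 0 < γ → γ < H →
      ∀ t ∈ Set.Ioc (0:ℝ) 1,
        (Real.log 2)^2 / G^2 / (2*H) * t ^ (2*H) ≤ F t ∧
          F t ≤ (2^(H-γ)/(H-γ))^2 / G^2 / (2*γ) * t ^ (2*γ) := by
    intro γ hγ hγH t ht
    obtain ⟨ht0, ht1⟩ := ht
    have hI : IntervalIntegrable (fun s => (logModKernel H s)^2) volume 0 t :=
      (kernel_intble hH).mono_set' (by
        rw [Set.uIoc_of_le ht0.le, Set.uIoc_of_le zero_le_one]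
        exact Set.Ioc_subset_Ioc_right ht1)
    have hIlow : IntervalIntegrable (fun s : ℝ => (Real.log 2)^2/G^2 * s ^ (2*H-1)) volume 0 t :=
      (intervalIntegrable_rpow' (by linarith)).const_mul _
    have hIup : IntervalIntegrable
        (fun s : ℝ => (2^(H-γ)/(H-γ))^2/G^2 * s ^ (2*γ-1)) volume 0 t :=
      (intervalIntegrable_rpow' (by linarith)).const_mul _
    have hae : ∀ᵐ x ∂(volume.restrict (Icc (0:ℝ) t)), x ∈ Ioc (0:ℝ) t := by
      have h1 : ∀ᵐ x ∂(volume.restrict (Icc (0:ℝ) t)), x ∈ Icc (0:ℝ) t :=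
        ae_restrict_mem measurableSet_Icc
      have h2 : ∀ᵐ (x:ℝ), x ≠ 0 := by
        rw [ae_iff]
        simpa using measure_singleton (0:ℝ)
      filter_upwards [h1, ae_restrict_of_ae h2] with x hx hx0
      exact ⟨lt_of_le_of_ne hx.1 (Ne.symm hx0), hx.2⟩
    constructor
    · have hmono := intervalIntegral.integral_mono_ae_restrict ht0.le hIlow hI (by
        filter_upwards [hae] with x hx
        exact kernel_sq_ge hH hx.1 (hx.2.trans ht1))
      refine le_trans (le_of_eq ?_) hmono
      rw [intervalIntegral.integral_const_mul, integral_rpow (Or.inl (by linarith)),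
        show 2*H - 1 + 1 = 2*H by ring, Real.zero_rpow (by positivity)]
      ring
    · have hmono := intervalIntegral.integral_mono_ae_restrict ht0.le hI hIup (by
        filter_upwards [hae] with x hx
        exact kernel_sq_le hγ hγH hx.1 (hx.2.trans ht1))
      refine hmono.trans (le_of_eq ?_)
      rw [intervalIntegral.integral_const_mul, integral_rpow (Or.inl (by linarith)),
        show 2*γ - 1 + 1 = 2*γ by ring, Real.zero_rpow (by positivity)]
      ring
  refine ⟨?_, fun γ hγ hγH => ⟨_, _,
    by positivity,
    by
      have h1 : (0:ℝ) < 2^(H-γ) := Real.rpow_pos_of_pos (by norm_num) _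
      have h2 : (0:ℝ) < H - γ := by linarith
      positivity,
    keyb γ hγ hγH⟩⟩
  -- Part (a)
  set c := 2*H*G^2 with hcdef
  have hc : 0 < c := by positivity
  set g := fun t : ℝ => t ^ (2*H) * (Real.log t)^2 / c with hgdef
  set b := Real.exp (-(1 + 1/H)) with hbdef
  have hb0 : 0 < b := Real.exp_pos _
  have hb1 : b < 1 := by
    rw [hbdef, Real.exp_lt_one_iff]
    have : 0 < 1/H := by positivity
    linarith
  have hbL : ∀ x ∈ Ioo (0:ℝ) b, 1 + 1/H < -Real.log x := by
    intro x hx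
    have := Real.log_lt_log hx.1 hx.2
    rw [hbdef, Real.log_exp] at this
    linarith
  set f' := fun x : ℝ => (logModKernel H x) ^ 2 with hf'def
  set g' := fun x : ℝ =>
    (2*H*x^(2*H-1) * (Real.log x)^2 + x^(2*H) * (2 * Real.log x * x⁻¹))/c with hg'def
  have hff' : ∀ x ∈ Ioo (0:ℝ) b, HasDerivAt F (f' x) x := by
    intro x hx
    have hI : IntervalIntegrable (fun s => (logModKernel H s)^2) volume 0 x :=
      (kernel_intble hH).mono_set' (by
        rw [Set.uIoc_of_le hx.1.le, Set.uIoc_of_le zero_le_one]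
        exact Set.Ioc_subset_Ioc_right (hx.2.trans hb1).le)
    exact intervalIntegral.integral_hasDerivAt_right hI
      ⟨Ioi 0, Ioi_mem_nhds hx.1, (kernel_contOn H).aestronglyMeasurable measurableSet_Ioi⟩
      (kernel_contAt hx.1)
  have hgg' : ∀ x ∈ Ioo (0:ℝ) b, HasDerivAt g (g' x) x := by
    intro x hx
    have h1 : HasDerivAt (fun t : ℝ => t ^ (2*H)) (2*H*x^(2*H-1)) x :=
      Real.hasDerivAt_rpow_const (Or.inl hx.1.ne')
    have h2 : HasDerivAt (fun t : ℝ => (Real.log t)^2) ((2:ℕ) * Real.log x ^ (2-1) * x⁻¹) x :=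
      (Real.hasDerivAt_log hx.1.ne').pow 2
    have h3 := (h1.mul h2).div_const c
    refine h3.congr_deriv ?_
    rw [hg'def]
    push_cast
    ring
  have hgeq : ∀ x ∈ Ioo (0:ℝ) b,
      g' x = x^(2*H-1) * (Real.log x * (2*H*Real.log x + 2)) / c := by
    intro x hx
    have hx2 : x ^ (2*H) = x ^ (2*H-1) * x := by
      rw [← Real.rpow_add_one hx.1.ne']; norm_num
    rw [hg'def]
    simp only
    rw [hx2]
    field_simp [hx.1.ne']
  have hg'ne : ∀ x ∈ Ioo (0:ℝ) b, g' x ≠ 0 := by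
    intro x hx
    have hL := hbL x hx
    have hH1 : 0 < 1/H := by positivity
    have hHl : 1 < H * (-Real.log x) := by
      have h1 : 1/H < -Real.log x := by linarith
      have := mul_lt_mul_of_pos_left h1 hH
      rwa [mul_one_div_cancel hH.ne'] at this
    have hlneg : Real.log x < 0 := by nlinarith
    have h2Hl : 2*H*Real.log x + 2 < 0 := by nlinarith
    rw [hgeq x hx]
    have hpos : 0 < x^(2*H-1) * (Real.log x * (2*H*Real.log x + 2)) / c :=
      div_pos (mul_pos (Real.rpow_pos_of_pos hx.1 _)
        (mul_pos_of_neg_of_neg hlneg h2Hl)) hc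
    exact hpos.ne'
  -- F → 0
  have hIoo : Ioo (0:ℝ) 1 ∈ nhdsWithin (0:ℝ) (Set.Ioi 0) :=
    Ioo_mem_nhdsGT_of_mem ⟨le_refl 0, zero_lt_one⟩
  have hfa : Tendsto F (nhdsWithin 0 (Set.Ioi 0)) (nhds 0) := by
    have htu : Tendsto (fun t : ℝ => (2^(H-H/2)/(H-H/2))^2/G^2/(2*(H/2)) * t ^ (2*(H/2)))
        (nhdsWithin 0 (Set.Ioi 0)) (nhds 0) := by
      have hcont : ContinuousAt (fun t : ℝ => t ^ (2*(H/2))) 0 :=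
        Real.continuousAt_rpow_const 0 _ (Or.inr (by linarith))
      have h1 : Tendsto (fun t : ℝ => t ^ (2*(H/2))) (nhdsWithin 0 (Set.Ioi 0))
          (nhds ((0:ℝ) ^ (2*(H/2)))) := hcont.tendsto.mono_left nhdsWithin_le_nhds
      rw [Real.zero_rpow (by positivity : 2*(H/2) ≠ 0)] at h1
      simpa using h1.const_mul ((2^(H-H/2)/(H-H/2))^2/G^2/(2*(H/2)))
    refine tendsto_of_tendsto_of_tendsto_of_le_of_le' tendsto_const_nhds htu ?_ ?_
    · filter_upwards [hIoo] with t ht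
      refine le_trans ?_ (keyb (H/2) (by positivity) (by linarith) t ⟨ht.1, ht.2.le⟩).1
      have := ht.1
      positivity
    · filter_upwards [hIoo] with t ht
      exact (keyb (H/2) (by positivity) (by linarith) t ⟨ht.1, ht.2.le⟩).2
  -- g → 0
  have hga : Tendsto g (nhdsWithin 0 (Set.Ioi 0)) (nhds 0) := by
    have h1 := tendsto_log_mul_rpow_nhdsGT_zero hH
    have h2 : Tendsto (fun x : ℝ => (Real.log x * x ^ H) * (Real.log x * x ^ H) / c)
        (nhdsWithin 0 (Set.Ioi 0)) (nhds 0) := by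
      simpa using (h1.mul h1).div_const c
    refine Filter.Tendsto.congr' ?_ h2
    filter_upwards [self_mem_nhdsWithin] with x hx
    have hx0 : (0:ℝ) < x := hx
    have hxx : x ^ (2*H) = x ^ H * x ^ H := by
      rw [← Real.rpow_add hx0]; ring_nf
    rw [hgdef]
    simp only
    rw [hxx]
    ring
  -- f'/g' → 1
  have hL : Tendsto (fun x : ℝ => -Real.log x) (nhdsWithin 0 (Set.Ioi 0)) atTop :=
    tendsto_neg_atBot_atTop.comp Real.tendsto_log_nhdsGT_zero
  have h1p : Tendsto (fun x : ℝ => Real.log (1 + x)) (nhdsWithin 0 (Set.Ioi 0)) (nhds 0) := by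
    have hct : ContinuousAt (fun x : ℝ => Real.log (1 + x)) 0 :=
      (Real.continuousAt_log (by norm_num)).comp (continuousAt_const.add continuousAt_id)
    have h2 : Tendsto (fun x : ℝ => Real.log (1 + x)) (nhdsWithin 0 (Set.Ioi 0))
        (nhds (Real.log (1 + 0))) := hct.tendsto.mono_left nhdsWithin_le_nhds
    simpa using h2
  have hq1 : Tendsto (fun x : ℝ => Real.log (1+x) / (-Real.log x))
      (nhdsWithin 0 (Set.Ioi 0)) (nhds 0) := h1p.div_atTop hL
  have hq2 : Tendsto (fun x : ℝ => 2 / (-Real.log x))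
      (nhdsWithin 0 (Set.Ioi 0)) (nhds 0) := tendsto_const_nhds.div_atTop hL
  have hh : Tendsto (fun x : ℝ =>
      (1 + Real.log (1+x)/(-Real.log x))^2 * (2*H / (2*H - 2/(-Real.log x))))
      (nhdsWithin 0 (Set.Ioi 0)) (nhds 1) := by
    have hA : Tendsto (fun x : ℝ => (1 + Real.log (1+x)/(-Real.log x))^2)
        (nhdsWithin 0 (Set.Ioi 0)) (nhds ((1+0)^2)) := (tendsto_const_nhds.add hq1).pow 2
    have hB : Tendsto (fun x : ℝ => 2*H / (2*H - 2/(-Real.log x)))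
        (nhdsWithin 0 (Set.Ioi 0)) (nhds (2*H/(2*H - 0))) :=
      tendsto_const_nhds.div (tendsto_const_nhds.sub hq2)
        (by rw [sub_zero]; positivity)
    have hAB := hA.mul hB
    convert hAB using 2
    rw [sub_zero, div_self (by positivity : (2*H:ℝ) ≠ 0)]
    norm_num
  have hdiv : Tendsto (fun x => f' x / g' x) (nhdsWithin 0 (Set.Ioi 0)) (nhds 1) := by
    refine Filter.Tendsto.congr' ?_ hh
    filter_upwards [Ioo_mem_nhdsGT_of_mem ⟨le_refl (0:ℝ), hb0⟩] with x hx
    have hx0 : (0:ℝ) < x := hx.1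
    have hLx := hbL x hx
    have hH1 : 0 < 1/H := by positivity
    have hHl : 1 < H * (-Real.log x) := by
      have h1 : 1/H < -Real.log x := by linarith
      have := mul_lt_mul_of_pos_left h1 hH
      rwa [mul_one_div_cancel hH.ne'] at this
    have hlneg : Real.log x < 0 := by nlinarith
    have hlne : Real.log x ≠ 0 := hlneg.ne
    have h2Hl : 2*H*Real.log x + 2 < 0 := by nlinarith
    have hBne : 2*H - 2/(-Real.log x) ≠ 0 := by
      have h2 : 2 / (-Real.log x) < 2*H := by
        rw [div_lt_iff₀ (by linarith : (0:ℝ) < -Real.log x)]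
        nlinarith
      linarith
    have hlog : Real.log (1 + 1/x) = Real.log (1+x) - Real.log x := by
      rw [show 1 + 1/x = (1+x)/x from by field_simp; ring,
        Real.log_div (by positivity) hx0.ne']
    have hfx : f' x = x^(2*H-1) * (Real.log (1+x) - Real.log x)^2 / G^2 := by
      rw [hf'def]
      simp only
      rw [kernel_sq_eq hx0, hlog, hGdef]
    have hxp : (0:ℝ) < x^(2*H-1) := Real.rpow_pos_of_pos hx0 _
    have hprod : Real.log x * (2*H*Real.log x + 2) ≠ 0 :=
      (mul_pos_of_neg_of_neg hlneg h2Hl).ne'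
    have hlhs : (1 + Real.log (1+x)/(-Real.log x))^2 * (2*H / (2*H - 2/(-Real.log x)))
        = 2*H*(Real.log (1+x) - Real.log x)^2 / (Real.log x * (2*H*Real.log x + 2)) := by
      have e1 : 1 + Real.log (1+x)/(-Real.log x)
          = (Real.log (1+x) - Real.log x)/(-Real.log x) := by
        field_simp [hlne]
        ring
      have e2 : 2*H - 2/(-Real.log x) = (2*H*Real.log x + 2)/Real.log x := by
        field_simp [hlne]
        ring
      rw [e1, e2, div_pow, neg_sq, div_div_eq_mul_div, div_mul_div_comm,
        show Real.log x^2 * (2*H*Real.log x + 2)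
          = Real.log x * (Real.log x * (2*H*Real.log x + 2)) from by ring,
        show (Real.log (1+x) - Real.log x)^2 * (2*H*Real.log x)
          = Real.log x * (2*H*(Real.log (1+x) - Real.log x)^2) from by ring,
        mul_div_mul_left _ _ hlne]
    have hrhs : (x^(2*H-1) * (Real.log (1+x) - Real.log x)^2 / G^2)
          / (x^(2*H-1) * (Real.log x * (2*H*Real.log x + 2)) / (2*H*G^2))
        = 2*H*(Real.log (1+x) - Real.log x)^2 / (Real.log x * (2*H*Real.log x + 2)) := by
      rw [div_div_div_eq]
      rw [show x^(2*H-1) * (Real.log (1+x) - Real.log x)^2 * (2*H*G^2)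
          = (2*H*(Real.log (1+x) - Real.log x)^2) * (x^(2*H-1) * G^2) from by ring,
        show G^2 * (x^(2*H-1) * (Real.log x * (2*H*Real.log x + 2)))
          = (Real.log x * (2*H*Real.log x + 2)) * (x^(2*H-1) * G^2) from by ring]
      exact mul_div_mul_right _ _ (by positivity)
    rw [hfx, hgeq x hx, hcdef, hlhs, hrhs]
  have hmain : Tendsto (fun t => F t / g t) (nhdsWithin 0 (Set.Ioi 0)) (nhds 1) :=
    HasDerivAt.lhopital_zero_right_on_Ioo hb0 hff' hgg' hg'ne hfa hga hdiv
  refine hmain.congr fun t => ?_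
  have hlt : Real.log (1/t) ^ 2 = Real.log t ^ 2 := by
    rw [one_div, Real.log_inv, neg_sq]
  simp only [hgdef, hlt]
  rfl
end

section
/- Let H > 0 and define the log-modulated fractional kernel K(t) := t^{H−1/2} log(1 + 1/t) / Γ(H + 1/2) for t > 0, and set λ(n) := (∫₀^{1/n} K(r)² dr)^{−1}. Then for all 0 < s ≤ t one has lim_{n→∞} λ(n) ∫₀^{s/n} K((t−s)/n + r) K(r) dr = 2H ∫₀^s (t−s+r)^{H−1/2} r^{H−1/2} dr. -/
open MeasureTheory Set Filter intervalIntegral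

/- ------------------- auxiliary definitions ------------------- -/

/-- Rescaled numerator integral. -/
noncomputable def NintAux (H s c : ℝ) (n : ℕ) : ℝ :=
  ∫ u in (0:ℝ)..s, ((c + u) ^ (H - 1/2) * u ^ (H - 1/2)) *
    (Real.log (1 + n / (c + u)) * Real.log (1 + n / u))

/-- Rescaled denominator integral. -/
noncomputable def DintAux (H : ℝ) (n : ℕ) : ℝ :=
  ∫ u in (0:ℝ)..1, (u ^ (H - 1/2))^2 * (Real.log (1 + n / u))^2

/- ------------------- helper lemmas ------------------- -/

lemma logRatio_tendsto (c : ℝ) (hc : 0 < c) :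
    Tendsto (fun n : ℕ => Real.log (1 + n / c) / Real.log n) atTop (nhds 1) := by
  have hlog : Tendsto (fun n : ℕ => Real.log n) atTop atTop :=
    Real.tendsto_log_atTop.comp tendsto_natCast_atTop_atTop
  have hinv : Tendsto (fun n : ℕ => (Real.log n)⁻¹) atTop (nhds 0) :=
    hlog.inv_tendsto_atTop
  have h2 : Tendsto (fun n : ℕ => Real.log (1 + c / n) - Real.log c) atTop
      (nhds (0 - Real.log c)) := by
    apply Filter.Tendsto.sub_const
    have h : Tendsto (fun n : ℕ => 1 + c / n) atTop (nhds 1) := by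
      have : Tendsto (fun n : ℕ => c / n) atTop (nhds 0) :=
        tendsto_const_nhds.div_atTop tendsto_natCast_atTop_atTop
      simpa using tendsto_const_nhds.add this
    simpa [Function.comp_def] using (Real.continuousAt_log (by norm_num)).tendsto.comp h
  have key : Tendsto (fun n : ℕ => 1 + (Real.log (1 + c / n) - Real.log c) * (Real.log n)⁻¹)
      atTop (nhds 1) := by
    have := (h2.mul hinv)
    simpa using tendsto_const_nhds.add this
  refine key.congr' ?_
  filter_upwards [eventually_ge_atTop 2] with n hn
  have hn1 : (1:ℝ) ≤ (n:ℝ) := by exact_mod_cast Nat.one_le_of_lt hn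
  have hnpos : (0:ℝ) < n := by linarith
  have hlogn : Real.log n ≠ 0 := by
    have : (1:ℝ) < n := by exact_mod_cast hn
    exact ne_of_gt (Real.log_pos this)
  have h1 : Real.log (1 + (n:ℝ)/c) = Real.log (c + n) - Real.log c := by
    rw [show 1 + (n:ℝ)/c = (c+n)/c by field_simp]
    rw [Real.log_div (by positivity) (ne_of_gt hc)]
  have h3 : Real.log (c + n) = Real.log (1 + c/n) + Real.log n := by
    rw [show c + (n:ℝ) = (1 + c/n) * n by field_simp; ring]
    rw [Real.log_mul (by positivity) (ne_of_gt hnpos)]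
  rw [eq_comm, h1, h3]
  field_simp
  ring

lemma log_bound (n : ℕ) (hn : 2 ≤ n) (x : ℝ) (hx : 0 < x) :
    Real.log (1 + n / x) ≤ Real.log n * (2 + Real.log (1 + 1/x) / Real.log 2) := by
  have hn2 : (2:ℝ) ≤ n := by exact_mod_cast hn
  have hlogn : Real.log 2 ≤ Real.log n := Real.log_le_log (by norm_num) hn2
  have hlog2 : 0 < Real.log 2 := Real.log_pos (by norm_num)
  have h1x : 0 < 1/x := by positivity
  have hL1 : 0 ≤ Real.log (1 + 1/x) := Real.log_nonneg (by linarith)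
  have step1 : 1 + (n:ℝ)/x ≤ (1 + n) * (1 + 1/x) := by
    have h : (1 + (n:ℝ)) * (1 + 1/x) = 1 + 1/x + n + n/x := by ring
    rw [h]
    linarith
  have step2 : Real.log (1 + (n:ℝ)/x) ≤ Real.log (1+n) + Real.log (1+1/x) := by
    calc Real.log (1 + (n:ℝ)/x) ≤ Real.log ((1+n)*(1+1/x)) :=
          Real.log_le_log (by positivity) step1
      _ = _ := Real.log_mul (by positivity) (by positivity)
  have step3 : Real.log (1 + (n:ℝ)) ≤ 2 * Real.log n := by
    calc Real.log (1 + (n:ℝ)) ≤ Real.log ((n:ℝ)^(2:ℕ)) :=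
          Real.log_le_log (by positivity) (by nlinarith)
      _ = 2 * Real.log n := by rw [Real.log_pow]; push_cast; ring
  have step4 : Real.log (1+1/x) ≤ Real.log n * (Real.log (1+1/x) / Real.log 2) := by
    rw [mul_div_assoc', le_div_iff₀ hlog2]
    calc Real.log (1+1/x) * Real.log 2 ≤ Real.log (1+1/x) * Real.log n :=
          mul_le_mul_of_nonneg_left hlogn hL1
      _ = Real.log n * Real.log (1+1/x) := by ring
  calc Real.log (1 + (n:ℝ)/x) ≤ Real.log (1+n) + Real.log (1+1/x) := step2
    _ ≤ 2 * Real.log n + Real.log n * (Real.log (1+1/x)/Real.log 2) := by linarith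
    _ = Real.log n * (2 + Real.log (1+1/x)/Real.log 2) := by ring

lemma B_integrable (p : ℝ) (hp : -1 < p) (s : ℝ) (hs : 0 < s) :
    IntegrableOn (fun u => u ^ p * (2 + Real.log (1 + 1/u) / Real.log 2)^2)
      (Ioc 0 s) volume := by
  set ε := (p+1)/4 with hε
  have hεpos : 0 < ε := by rw [hε]; linarith
  have hlog2 : 0 < Real.log 2 := Real.log_pos (by norm_num)
  set C : ℝ := 2 * (1/(ε * Real.log 2))^2 with hC
  have hCpos : 0 ≤ C := by positivity
  have hint : IntegrableOn (fun u => 18 * u ^ p + C * u ^ (p - 2*ε)) (Ioc 0 s) volume := by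
    have h1 : IntervalIntegrable (fun u : ℝ => u ^ p) volume 0 s :=
      intervalIntegral.intervalIntegrable_rpow' hp
    have h2 : IntervalIntegrable (fun u : ℝ => u ^ (p - 2*ε)) volume 0 s :=
      intervalIntegral.intervalIntegrable_rpow' (by rw [hε]; linarith)
    have := ((h1.const_mul 18).add (h2.const_mul C))
    rwa [intervalIntegrable_iff_integrableOn_Ioc_of_le hs.le] at this
  apply Integrable.mono' hint
  · apply Measurable.aestronglyMeasurable
    have m1 : Measurable fun u : ℝ => Real.log (1 + 1/u) :=
      Real.measurable_log.comp (measurable_const.add (measurable_const.div measurable_id))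
    fun_prop
  · rw [ae_restrict_iff' measurableSet_Ioc]
    filter_upwards with u hu
    obtain ⟨hu0, hus⟩ := hu
    have h1u0 : 0 < 1/u := by positivity
    have hB0 : 0 ≤ Real.log (1 + 1/u) := Real.log_nonneg (by linarith)
    have hkey : Real.log (1 + 1/u) ≤ Real.log 2 + u ^ (-ε) / ε := by
      rcases le_or_gt 1 u with h1 | h1
      · have h2 : 1 + 1/u ≤ 2 := by
          have : 1/u ≤ 1 := by rw [div_le_one hu0]; exact h1
          linarith
        have := Real.log_le_log (by positivity) h2
        have hpos : 0 ≤ u ^ (-ε) / ε := by positivity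
        linarith
      · have h1u : (1:ℝ) ≤ 1/u := by rw [le_div_iff₀ hu0]; linarith
        have h2 : 1 + 1/u ≤ 2 * u⁻¹ := by
          have : 2 * u⁻¹ = 1/u + 1/u := by ring
          rw [this]; linarith
        calc Real.log (1 + 1/u) ≤ Real.log (2 * u⁻¹) :=
              Real.log_le_log (by positivity) h2
          _ = Real.log 2 + Real.log u⁻¹ := Real.log_mul (by norm_num) (by positivity)
          _ ≤ Real.log 2 + (u⁻¹) ^ ε / ε := by
              have := Real.log_le_rpow_div (le_of_lt (by positivity : (0:ℝ) < u⁻¹)) hεpos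
              linarith
          _ = Real.log 2 + u ^ (-ε) / ε := by
              rw [Real.inv_rpow hu0.le, ← Real.rpow_neg hu0.le]
    have h3 : 2 + Real.log (1 + 1/u) / Real.log 2 ≤ 3 + u ^ (-ε)/(ε * Real.log 2) := by
      have hdiv : Real.log (1+1/u)/Real.log 2 ≤ (Real.log 2 + u^(-ε)/ε)/Real.log 2 := by
        gcongr
      have heq : (Real.log 2 + u^(-ε)/ε)/Real.log 2 = 1 + u^(-ε)/(ε*Real.log 2) := by
        field_simp
      linarith
    have hnn : 0 ≤ 2 + Real.log (1 + 1/u) / Real.log 2 := by positivity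
    have h4 : (2 + Real.log (1 + 1/u) / Real.log 2)^2 ≤ (3 + u ^ (-ε)/(ε * Real.log 2))^2 :=
      pow_le_pow_left₀ hnn h3 2
    have h5 : (3 + u ^ (-ε)/(ε * Real.log 2))^2 ≤ 2*9 + 2*(u ^ (-ε)/(ε * Real.log 2))^2 := by
      nlinarith [sq_nonneg (3 - u ^ (-ε)/(ε*Real.log 2))]
    have h6 : (u ^ (-ε)/(ε * Real.log 2))^2 = (1/(ε * Real.log 2))^2 * (u ^ (-ε) * u ^ (-ε)) := by
      ring
    have h7 : u ^ (-ε) * u ^ (-ε) = u ^ (-(2*ε)) := by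
      rw [← Real.rpow_add hu0]; ring_nf
    have hsq : (2 + Real.log (1 + 1/u) / Real.log 2)^2 ≤ 18 + C * u ^ (-(2*ε)) := by
      rw [h6, h7] at h5
      rw [hC]
      linarith
    have hppos : (0:ℝ) ≤ u ^ p := by positivity
    rw [Real.norm_eq_abs, abs_of_nonneg (by positivity)]
    calc u ^ p * (2 + Real.log (1 + 1/u) / Real.log 2)^2
        ≤ u ^ p * (18 + C * u ^ (-(2*ε))) := mul_le_mul_of_nonneg_left hsq hppos
      _ = 18 * u ^ p + C * (u ^ p * u ^ (-(2*ε))) := by ring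
      _ = 18 * u ^ p + C * u ^ (p - 2*ε) := by
          rw [← Real.rpow_add hu0]; ring_nf

lemma kernel_rescale (H : ℝ) (n : ℕ) (x : ℝ) (hx : 0 ≤ x) :
    logModKernel H (x / n) =
      x ^ (H - 1/2) * ((n:ℝ) ^ (-(H - 1/2))) * Real.log (1 + n / x) /
        Real.Gamma (H + 1/2) := by
  unfold logModKernel
  rw [one_div_div, Real.div_rpow hx (Nat.cast_nonneg n), Real.rpow_neg (Nat.cast_nonneg n)]
  ring

lemma subN (H s c : ℝ) (hs : 0 < s) (hc : 0 ≤ c) (n : ℕ) (hn : 1 ≤ n) :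
    (∫ r in (0:ℝ)..(s / (n:ℝ)), logModKernel H (c / (n:ℝ) + r) * logModKernel H r)
      = (((n:ℝ) ^ (-(H - 1/2)))^2 / Real.Gamma (H + 1/2)^2 / n) * NintAux H s c n := by
  have hn0 : ((n:ℝ)) ≠ 0 := Nat.cast_ne_zero.mpr (by omega)
  have hcomp := intervalIntegral.integral_comp_div (a := (0:ℝ)) (b := s) (c := (n:ℝ))
      (f := fun x => logModKernel H (c / (n:ℝ) + x) * logModKernel H x) hn0
  rw [zero_div] at hcomp
  have hI : (∫ r in (0:ℝ)..(s / (n:ℝ)), logModKernel H (c / (n:ℝ) + r) * logModKernel H r)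
      = (n:ℝ)⁻¹ * (∫ x in (0:ℝ)..s,
          logModKernel H (c / (n:ℝ) + x / (n:ℝ)) * logModKernel H (x / (n:ℝ))) := by
    rw [show (∫ x in (0:ℝ)..s,
          logModKernel H (c / (n:ℝ) + x / (n:ℝ)) * logModKernel H (x / (n:ℝ)))
        = ((n:ℝ)) • (∫ r in (0:ℝ)..(s / (n:ℝ)),
            logModKernel H (c / (n:ℝ) + r) * logModKernel H r) from hcomp, smul_eq_mul]
    field_simp
  have hcongr : (∫ x in (0:ℝ)..s,
        logModKernel H (c / (n:ℝ) + x / (n:ℝ)) * logModKernel H (x / (n:ℝ)))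
      = (((n:ℝ) ^ (-(H - 1/2)))^2 / Real.Gamma (H + 1/2)^2) * NintAux H s c n := by
    unfold NintAux
    rw [← intervalIntegral.integral_const_mul]
    apply intervalIntegral.integral_congr
    intro u hu
    rw [uIcc_of_le hs.le] at hu
    have hu0 : 0 ≤ u := hu.1
    have h1 : c / (n:ℝ) + u / (n:ℝ) = (c + u) / (n:ℝ) := by ring
    simp only
    rw [h1, kernel_rescale H n (c+u) (add_nonneg hc hu0), kernel_rescale H n u hu0]
    ring
  rw [hI, hcongr]
  ring

lemma subD (H : ℝ) (n : ℕ) (hn : 1 ≤ n) :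
    (∫ r in (0:ℝ)..(1 / (n:ℝ)), (logModKernel H r)^2)
      = (((n:ℝ) ^ (-(H - 1/2)))^2 / Real.Gamma (H + 1/2)^2 / n) * DintAux H n := by
  have hn0 : ((n:ℝ)) ≠ 0 := Nat.cast_ne_zero.mpr (by omega)
  have hcomp := intervalIntegral.integral_comp_div (a := (0:ℝ)) (b := 1) (c := (n:ℝ))
      (f := fun x => (logModKernel H x)^2) hn0
  rw [zero_div] at hcomp
  have hI : (∫ r in (0:ℝ)..(1 / (n:ℝ)), (logModKernel H r)^2)
      = (n:ℝ)⁻¹ * (∫ x in (0:ℝ)..1, (logModKernel H (x / (n:ℝ)))^2) := by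
    rw [show (∫ x in (0:ℝ)..1, (logModKernel H (x / (n:ℝ)))^2)
        = ((n:ℝ)) • (∫ r in (0:ℝ)..(1 / (n:ℝ)), (logModKernel H r)^2) from hcomp,
      smul_eq_mul]
    field_simp
  have hcongr : (∫ x in (0:ℝ)..1, (logModKernel H (x / (n:ℝ)))^2)
      = (((n:ℝ) ^ (-(H - 1/2)))^2 / Real.Gamma (H + 1/2)^2) * DintAux H n := by
    unfold DintAux
    rw [← intervalIntegral.integral_const_mul]
    apply intervalIntegral.integral_congr
    intro u hu
    rw [uIcc_of_le (by norm_num : (0:ℝ) ≤ 1)] at hu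
    have hu0 : 0 ≤ u := hu.1
    simp only
    rw [kernel_rescale H n u hu0]
    ring
  rw [hI, hcongr]
  ring

lemma numLim (H : ℝ) (hH : 0 < H) (s c : ℝ) (hs : 0 < s) (hc : 0 ≤ c) :
    Tendsto (fun n : ℕ => ((Real.log n)^2)⁻¹ * NintAux H s c n) atTop
      (nhds (∫ u in (0:ℝ)..s, (c + u) ^ (H - 1/2) * u ^ (H - 1/2))) := by
  set μ := volume.restrict (Ioc (0:ℝ) s) with hμ
  set FN : ℕ → ℝ → ℝ := fun n u => ((Real.log n)^2)⁻¹ *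
      (((c + u) ^ (H - 1/2) * u ^ (H - 1/2)) *
        (Real.log (1 + n / (c + u)) * Real.log (1 + n / u))) with hFN
  have hlog2 : 0 < Real.log 2 := Real.log_pos (by norm_num)
  have hmeas : ∀ n : ℕ, AEStronglyMeasurable (FN n) μ := by
    intro n
    have m0 : Measurable fun u : ℝ => (c + u) ^ (H - 1/2) := by fun_prop
    have m1 : Measurable fun u : ℝ => u ^ (H - 1/2) := by fun_prop
    have m2 : Measurable fun u : ℝ => Real.log (1 + n / (c + u)) :=
      Real.measurable_log.comp (measurable_const.add (measurable_const.div
        (measurable_const.add measurable_id)))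
    have m3 : Measurable fun u : ℝ => Real.log (1 + n / u) :=
      Real.measurable_log.comp (measurable_const.add (measurable_const.div measurable_id))
    exact (((m0.mul m1).mul (m2.mul m3)).const_mul _).aestronglyMeasurable
  have hbound_int : Integrable (fun u =>
      (u ^ (H - 1/2) + (c + s) ^ (H - 1/2)) * u ^ (H - 1/2) *
        (2 + Real.log (1 + 1/u) / Real.log 2)^2) μ := by
    have i1 := B_integrable (2*H - 1) (by linarith) s hs
    have i2 := B_integrable (H - 1/2) (by linarith) s hs
    have hsum := i1.add (i2.const_mul ((c + s) ^ (H - 1/2)))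
    apply hsum.congr
    filter_upwards [ae_restrict_mem measurableSet_Ioc] with u hu
    have hu0 : 0 < u := hu.1
    simp only [Pi.add_apply]
    rw [show (2*H - 1 : ℝ) = (H - 1/2) + (H - 1/2) by ring, Real.rpow_add hu0]
    ring
  have h_bound : ∀ᶠ (n : ℕ) in atTop, ∀ᵐ u ∂μ, ‖FN n u‖ ≤
      (u ^ (H - 1/2) + (c + s) ^ (H - 1/2)) * u ^ (H - 1/2) *
        (2 + Real.log (1 + 1/u) / Real.log 2)^2 := by
    filter_upwards [eventually_ge_atTop 2] with n hn
    rw [hμ, ae_restrict_iff' measurableSet_Ioc]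
    filter_upwards with u hu
    obtain ⟨hu0, hus⟩ := hu
    have hcu0 : 0 < c + u := by linarith
    have hlognpos : 0 < Real.log n :=
      Real.log_pos (by exact_mod_cast Nat.lt_of_lt_of_le one_lt_two hn)
    have hlogn : Real.log n ≠ 0 := ne_of_gt hlognpos
    have hBd0 : 0 ≤ 2 + Real.log (1 + 1/u) / Real.log 2 := by
      have : 0 ≤ Real.log (1 + 1/u) := Real.log_nonneg (by
        have : 0 < 1/u := by positivity
        linarith)
      positivity
    have hL10 : 0 ≤ Real.log (1 + n / (c + u)) := Real.log_nonneg (by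
      have : 0 ≤ (n:ℝ) / (c + u) := by positivity
      linarith)
    have hL20 : 0 ≤ Real.log (1 + n / u) := Real.log_nonneg (by
      have : 0 ≤ (n:ℝ) / u := by positivity
      linarith)
    have hw0 : 0 ≤ (c + u) ^ (H - 1/2) * u ^ (H - 1/2) := by positivity
    have hq0 : (0:ℝ) ≤ ((Real.log n)^2)⁻¹ := by positivity
    have hBmono : Real.log (1 + 1/(c + u)) ≤ Real.log (1 + 1/u) := by
      apply Real.log_le_log (by positivity)
      have h1 : 1/(c + u) ≤ 1/u := by
        apply one_div_le_one_div_of_le hu0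
        linarith
      linarith
    have hL1 : Real.log (1 + n / (c + u)) ≤
        Real.log n * (2 + Real.log (1 + 1/u) / Real.log 2) := by
      refine le_trans (log_bound n hn (c + u) hcu0) ?_
      have : Real.log (1 + 1/(c+u)) / Real.log 2 ≤ Real.log (1 + 1/u) / Real.log 2 := by
        gcongr
      nlinarith
    have hL2 : Real.log (1 + n / u) ≤
        Real.log n * (2 + Real.log (1 + 1/u) / Real.log 2) :=
      log_bound n hn u hu0
    have hXnn : 0 ≤ Real.log n * (2 + Real.log (1 + 1/u) / Real.log 2) := by positivity
    have e1 : Real.log (1 + n / (c + u)) * Real.log (1 + n / u) ≤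
        (Real.log n)^2 * (2 + Real.log (1 + 1/u) / Real.log 2)^2 := by
      calc Real.log (1 + n / (c + u)) * Real.log (1 + n / u)
          ≤ (Real.log n * (2 + Real.log (1 + 1/u) / Real.log 2)) *
            (Real.log n * (2 + Real.log (1 + 1/u) / Real.log 2)) :=
            mul_le_mul hL1 hL2 hL20 hXnn
        _ = (Real.log n)^2 * (2 + Real.log (1 + 1/u) / Real.log 2)^2 := by ring
    have hFNnn : 0 ≤ FN n u := by
      rw [hFN]
      exact mul_nonneg hq0 (mul_nonneg hw0 (mul_nonneg hL10 hL20))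
    rw [Real.norm_eq_abs, abs_of_nonneg hFNnn]
    have step1 : FN n u ≤ ((c + u) ^ (H - 1/2) * u ^ (H - 1/2)) *
        (2 + Real.log (1 + 1/u) / Real.log 2)^2 := by
      have : FN n u ≤ ((Real.log n)^2)⁻¹ * (((c + u) ^ (H - 1/2) * u ^ (H - 1/2)) *
          ((Real.log n)^2 * (2 + Real.log (1 + 1/u) / Real.log 2)^2)) := by
        rw [hFN]
        exact mul_le_mul_of_nonneg_left (mul_le_mul_of_nonneg_left e1 hw0) hq0
      refine le_trans this (le_of_eq ?_)
      rw [show ((Real.log n)^2)⁻¹ * (((c + u) ^ (H - 1/2) * u ^ (H - 1/2)) *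
          ((Real.log n)^2 * (2 + Real.log (1 + 1/u) / Real.log 2)^2))
        = ((c + u) ^ (H - 1/2) * u ^ (H - 1/2)) *
          (2 + Real.log (1 + 1/u) / Real.log 2)^2 * ((Real.log n)^2 * ((Real.log n)^2)⁻¹)
          by ring, mul_inv_cancel₀ (pow_ne_zero 2 hlogn), mul_one]
    refine le_trans step1 ?_
    have hcu : (c + u) ^ (H - 1/2) ≤ u ^ (H - 1/2) + (c + s) ^ (H - 1/2) := by
      rcases le_or_gt (H - 1/2) 0 with h | h
      · have h1 : (c + u) ^ (H - 1/2) ≤ u ^ (H - 1/2) :=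
          Real.rpow_le_rpow_of_nonpos hu0 (by linarith) h
        have h2 : 0 ≤ (c + s) ^ (H - 1/2) := Real.rpow_nonneg (by linarith) _
        linarith
      · have h1 : (c + u) ^ (H - 1/2) ≤ (c + s) ^ (H - 1/2) :=
          Real.rpow_le_rpow (by linarith) (by linarith) h.le
        have h2 : 0 ≤ u ^ (H - 1/2) := Real.rpow_nonneg hu0.le _
        linarith
    have hup0 : 0 ≤ u ^ (H - 1/2) := Real.rpow_nonneg hu0.le _
    have := mul_le_mul_of_nonneg_right (mul_le_mul_of_nonneg_right hcu hup0)
      (sq_nonneg (2 + Real.log (1 + 1/u) / Real.log 2))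
    linarith
  have h_lim : ∀ᵐ u ∂μ, Tendsto (fun n => FN n u) atTop
      (nhds ((c + u) ^ (H - 1/2) * u ^ (H - 1/2))) := by
    rw [hμ, ae_restrict_iff' measurableSet_Ioc]
    filter_upwards with u hu
    obtain ⟨hu0, hus⟩ := hu
    have hcu0 : 0 < c + u := by linarith
    have h1 := logRatio_tendsto (c + u) hcu0
    have h2 := logRatio_tendsto u hu0
    have hmul := (h1.mul h2).const_mul ((c + u) ^ (H - 1/2) * u ^ (H - 1/2))
    have : Tendsto (fun n : ℕ => ((c + u) ^ (H - 1/2) * u ^ (H - 1/2)) *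
        ((Real.log (1 + n / (c + u)) / Real.log n) * (Real.log (1 + n / u) / Real.log n)))
        atTop (nhds ((c + u) ^ (H - 1/2) * u ^ (H - 1/2))) := by
      simpa using hmul
    refine this.congr' ?_
    filter_upwards [eventually_ge_atTop 2] with n hn
    have hlogn : Real.log n ≠ 0 :=
      ne_of_gt (Real.log_pos (by exact_mod_cast Nat.lt_of_lt_of_le one_lt_two hn))
    rw [hFN]
    simp only
    ring
  have hconv := MeasureTheory.tendsto_integral_filter_of_dominated_convergence
    (μ := μ) (F := FN) (f := fun u => (c + u) ^ (H - 1/2) * u ^ (H - 1/2))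
    _ (Eventually.of_forall hmeas) h_bound hbound_int h_lim
  have heq : ∀ n : ℕ, (∫ u, FN n u ∂μ) = ((Real.log n)^2)⁻¹ * NintAux H s c n := by
    intro n
    rw [hμ, hFN]
    rw [MeasureTheory.integral_const_mul]
    congr 1
    rw [NintAux, intervalIntegral.integral_of_le hs.le]
  have hlimeq : (∫ u, (c + u) ^ (H - 1/2) * u ^ (H - 1/2) ∂μ)
      = ∫ u in (0:ℝ)..s, (c + u) ^ (H - 1/2) * u ^ (H - 1/2) := by
    rw [hμ, intervalIntegral.integral_of_le hs.le]
  rw [hlimeq] at hconv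
  exact hconv.congr heq

lemma denLim (H : ℝ) (hH : 0 < H) :
    Tendsto (fun n : ℕ => ((Real.log n)^2)⁻¹ * DintAux H n) atTop (nhds (1/(2*H))) := by
  set μ := volume.restrict (Ioc (0:ℝ) 1) with hμ
  set FD : ℕ → ℝ → ℝ := fun n u => ((Real.log n)^2)⁻¹ *
      ((u ^ (H - 1/2))^2 * (Real.log (1 + n / u))^2) with hFD
  have hmeas : ∀ n : ℕ, AEStronglyMeasurable (FD n) μ := by
    intro n
    have m1 : Measurable fun u : ℝ => u ^ (H - 1/2) := by fun_prop
    have m3 : Measurable fun u : ℝ => Real.log (1 + n / u) :=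
      Real.measurable_log.comp (measurable_const.add (measurable_const.div measurable_id))
    exact (((m1.pow_const 2).mul (m3.pow_const 2)).const_mul _).aestronglyMeasurable
  have hbound_int : Integrable (fun u =>
      u ^ (2*H - 1) * (2 + Real.log (1 + 1/u) / Real.log 2)^2) μ :=
    B_integrable (2*H - 1) (by linarith) 1 one_pos
  have h_bound : ∀ᶠ (n : ℕ) in atTop, ∀ᵐ u ∂μ, ‖FD n u‖ ≤
      u ^ (2*H - 1) * (2 + Real.log (1 + 1/u) / Real.log 2)^2 := by
    filter_upwards [eventually_ge_atTop 2] with n hn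
    rw [hμ, ae_restrict_iff' measurableSet_Ioc]
    filter_upwards with u hu
    obtain ⟨hu0, hus⟩ := hu
    have hlognpos : 0 < Real.log n :=
      Real.log_pos (by exact_mod_cast Nat.lt_of_lt_of_le one_lt_two hn)
    have hlogn : Real.log n ≠ 0 := ne_of_gt hlognpos
    have hL20 : 0 ≤ Real.log (1 + n / u) := Real.log_nonneg (by
      have : 0 ≤ (n:ℝ) / u := by positivity
      linarith)
    have hL2 : Real.log (1 + n / u) ≤
        Real.log n * (2 + Real.log (1 + 1/u) / Real.log 2) := log_bound n hn u hu0
    have hXnn : 0 ≤ Real.log n * (2 + Real.log (1 + 1/u) / Real.log 2) := by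
      have : 0 ≤ Real.log (1 + 1/u) := Real.log_nonneg (by
        have : 0 < 1/u := by positivity
        linarith)
      have hlog2 : 0 < Real.log 2 := Real.log_pos (by norm_num)
      positivity
    have e1 : (Real.log (1 + n / u))^2 ≤
        (Real.log n)^2 * (2 + Real.log (1 + 1/u) / Real.log 2)^2 := by
      have := mul_le_mul hL2 hL2 hL20 hXnn
      nlinarith
    have hw0 : 0 ≤ (u ^ (H - 1/2))^2 := sq_nonneg _
    have hq0 : (0:ℝ) ≤ ((Real.log n)^2)⁻¹ := by positivity
    have hFDnn : 0 ≤ FD n u := by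
      rw [hFD]
      exact mul_nonneg hq0 (mul_nonneg hw0 (sq_nonneg _))
    rw [Real.norm_eq_abs, abs_of_nonneg hFDnn]
    have step1 : FD n u ≤ (u ^ (H - 1/2))^2 *
        (2 + Real.log (1 + 1/u) / Real.log 2)^2 := by
      have : FD n u ≤ ((Real.log n)^2)⁻¹ * ((u ^ (H - 1/2))^2 *
          ((Real.log n)^2 * (2 + Real.log (1 + 1/u) / Real.log 2)^2)) := by
        rw [hFD]
        exact mul_le_mul_of_nonneg_left (mul_le_mul_of_nonneg_left e1 hw0) hq0
      refine le_trans this (le_of_eq ?_)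
      rw [show ((Real.log n)^2)⁻¹ * ((u ^ (H - 1/2))^2 *
          ((Real.log n)^2 * (2 + Real.log (1 + 1/u) / Real.log 2)^2))
        = (u ^ (H - 1/2))^2 * (2 + Real.log (1 + 1/u) / Real.log 2)^2 *
          ((Real.log n)^2 * ((Real.log n)^2)⁻¹) by ring,
        mul_inv_cancel₀ (pow_ne_zero 2 hlogn), mul_one]
    refine le_trans step1 (le_of_eq ?_)
    rw [show (2*H - 1 : ℝ) = (H - 1/2) + (H - 1/2) by ring, Real.rpow_add hu0]
    ring
  have h_lim : ∀ᵐ u ∂μ, Tendsto (fun n => FD n u) atTop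
      (nhds ((u ^ (H - 1/2))^2)) := by
    rw [hμ, ae_restrict_iff' measurableSet_Ioc]
    filter_upwards with u hu
    obtain ⟨hu0, hus⟩ := hu
    have h2 := logRatio_tendsto u hu0
    have hmul := (h2.mul h2).const_mul ((u ^ (H - 1/2))^2)
    have : Tendsto (fun n : ℕ => (u ^ (H - 1/2))^2 *
        ((Real.log (1 + n / u) / Real.log n) * (Real.log (1 + n / u) / Real.log n)))
        atTop (nhds ((u ^ (H - 1/2))^2)) := by
      simpa using hmul
    refine this.congr' ?_
    filter_upwards [eventually_ge_atTop 2] with n hn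
    have hlogn : Real.log n ≠ 0 :=
      ne_of_gt (Real.log_pos (by exact_mod_cast Nat.lt_of_lt_of_le one_lt_two hn))
    rw [hFD]
    simp only
    ring
  have hconv := MeasureTheory.tendsto_integral_filter_of_dominated_convergence
    (μ := μ) (F := FD) (f := fun u => (u ^ (H - 1/2))^2)
    _ (Eventually.of_forall hmeas) h_bound hbound_int h_lim
  have heq : ∀ n : ℕ, (∫ u, FD n u ∂μ) = ((Real.log n)^2)⁻¹ * DintAux H n := by
    intro n
    rw [hμ, hFD]
    rw [MeasureTheory.integral_const_mul]
    congr 1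
    rw [DintAux, intervalIntegral.integral_of_le (by norm_num : (0:ℝ) ≤ 1)]
  have hlimeq : (∫ u, (u ^ (H - 1/2))^2 ∂μ) = 1/(2*H) := by
    rw [hμ]
    rw [MeasureTheory.setIntegral_congr_ae measurableSet_Ioc
      (g := fun u : ℝ => u ^ (2*H - 1)) (by
        filter_upwards with u hu
        rw [show (2*H - 1 : ℝ) = (H - 1/2) + (H - 1/2) by ring, Real.rpow_add hu.1]
        ring)]
    rw [← intervalIntegral.integral_of_le (by norm_num : (0:ℝ) ≤ 1)]
    rw [integral_rpow (Or.inl (by linarith))]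
    rw [Real.one_rpow, Real.zero_rpow (by linarith : (2*H - 1 + 1 : ℝ) ≠ 0)]
    rw [show (2*H - 1 + 1 : ℝ) = 2*H by ring]
    norm_num
  rw [hlimeq] at hconv
  exact hconv.congr heq

/-- Limiting-kernel identification of Example 5.2: for the log-modulated
fractional kernel, with `λ(n) = (∫₀^{1/n} K(r)² dr)⁻¹`, the rescaled
covariance convolution converges to the covariance associated with
`K̄(t) = √(2H) t^{H−1/2}`. -/
theorem stmt_17 (H : ℝ) (hH : 0 < H) :
    ∀ s t : ℝ, 0 < s → s ≤ t →
      Filter.Tendsto (fun n : ℕ =>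
          (∫ r in (0:ℝ)..(1 / (n : ℝ)), (logModKernel H r) ^ 2)⁻¹ *
            ∫ r in (0:ℝ)..(s / (n : ℝ)),
              logModKernel H ((t - s) / (n : ℝ) + r) * logModKernel H r)
        Filter.atTop
        (nhds (2 * H * ∫ r in (0:ℝ)..s, (t - s + r) ^ (H - 1/2) * r ^ (H - 1/2))) := by
  intro s t hs hst
  have hc : 0 ≤ t - s := by linarith
  have hΓ : 0 < Real.Gamma (H + 1/2) := Real.Gamma_pos_of_pos (by linarith)
  have hN := numLim H hH s (t - s) hs hc
  have hD := denLim H hH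
  have hq := hN.div hD (by positivity : (1/(2*H) : ℝ) ≠ 0)
  have hlim_eq : (∫ u in (0:ℝ)..s, (t - s + u) ^ (H - 1/2) * u ^ (H - 1/2)) / (1/(2*H))
      = 2 * H * ∫ r in (0:ℝ)..s, (t - s + r) ^ (H - 1/2) * r ^ (H - 1/2) := by
    rw [div_div_eq_mul_div, div_one]
    ring
  rw [hlim_eq] at hq
  refine hq.congr' ?_
  filter_upwards [eventually_ge_atTop 2] with n hn
  have hn1 : 1 ≤ n := le_trans one_le_two hn
  have hnpos : (0:ℝ) < n := by
    have : (2:ℝ) ≤ n := by exact_mod_cast hn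
    linarith
  have hlogn : Real.log n ≠ 0 :=
    ne_of_gt (Real.log_pos (by exact_mod_cast Nat.lt_of_lt_of_le one_lt_two hn))
  have hq0 : ((Real.log n)^2)⁻¹ ≠ 0 := by positivity
  have hcst0 : (((n:ℝ) ^ (-(H - 1/2)))^2 / Real.Gamma (H + 1/2)^2 / n) ≠ 0 := by
    have h1 : (0:ℝ) < ((n:ℝ) ^ (-(H - 1/2))) := Real.rpow_pos_of_pos hnpos _
    positivity
  simp only [Pi.div_apply]
  rw [subD H n hn1, subN H s (t - s) hs hc n hn1]
  rw [mul_div_mul_left _ _ hq0]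
  rw [show ((((n:ℝ) ^ (-(H - 1/2)))^2 / Real.Gamma (H + 1/2)^2 / n) * DintAux H n)⁻¹ *
      ((((n:ℝ) ^ (-(H - 1/2)))^2 / Real.Gamma (H + 1/2)^2 / n) * NintAux H s (t - s) n)
    = ((((n:ℝ) ^ (-(H - 1/2)))^2 / Real.Gamma (H + 1/2)^2 / n)⁻¹ *
        (((n:ℝ) ^ (-(H - 1/2)))^2 / Real.Gamma (H + 1/2)^2 / n)) *
      ((DintAux H n)⁻¹ * NintAux H s (t - s) n) by rw [mul_inv]; ring]
  rw [inv_mul_cancel₀ hcst0, one_mul, inv_mul_eq_div]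
end
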